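/- Let N ≥ 1, k > 0 and w̲ > 0. Suppose m : ℝ → (ZMod N → ℝ) is a family of differentiable functions t ↦ m_i(t) and w : ℝ → (ZMod N → ℝ) satisfies w_i(t) ≥ w̲ for all i and t ≥ 0, and suppose the dynamics m_i′(t) = k·(m_{i+1}(t) − m_i(t))·w_{i+1}(t) − k·(m_i(t) − m_{i−1}(t))·w_i(t) holds for all i ∈ ZMod N and t ≥ 0. Let m̄ = (1/N)∑_i m_i(t) (which is constant in t) and V(t) = ½∑_{i ∈ ZMod N} (m_i(t) − m̄)². Then V(t) ≤ V(0) · exp(−(2 k w̲ / N²) t) for all t ≥ 0. -/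

import Mathlib

lemma telescope_zmod {N : ℕ} (e : ZMod N → ℝ) (a : ZMod N) (r : ℕ) :
    e (a + (r : ZMod N)) - e a
      = ∑ s ∈ Finset.range r, (e (a + (s : ZMod N) + 1) - e (a + (s : ZMod N))) := by
  induction r with
  | zero => simp
  | succ n ih =>
    rw [Finset.sum_range_succ, ← ih]
    have h : a + ((n + 1 : ℕ) : ZMod N) = a + (n : ZMod N) + 1 := by push_cast; ring
    rw [h]; ring

lemma diff_le_sum_abs {N : ℕ} [NeZero N] (e : ZMod N → ℝ) (a b : ZMod N) :
    |e b - e a| ≤ ∑ j : ZMod N, |e (j + 1) - e j| := by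
  have hb : b = a + (((b - a).val : ℕ) : ZMod N) := by
    rw [ZMod.natCast_val, ZMod.cast_id]; ring
  rw [hb, telescope_zmod]
  refine (Finset.abs_sum_le_sum_abs _ _).trans ?_
  have hinj : ∀ x ∈ Finset.range (b - a).val, ∀ y ∈ Finset.range (b - a).val,
      a + (x : ZMod N) = a + (y : ZMod N) → x = y := by
    intro x hx y hy hxy
    have hx' : x < N := lt_of_lt_of_le (Finset.mem_range.mp hx) (ZMod.val_lt _).le
    have hy' : y < N := lt_of_lt_of_le (Finset.mem_range.mp hy) (ZMod.val_lt _).le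
    have : (x : ZMod N) = (y : ZMod N) := by
      have := add_left_cancel hxy; exact this
    calc x = ((x : ZMod N)).val := (ZMod.val_cast_of_lt hx').symm
      _ = ((y : ZMod N)).val := by rw [this]
      _ = y := ZMod.val_cast_of_lt hy'
  calc ∑ s ∈ Finset.range (b - a).val, |e (a + (s : ZMod N) + 1) - e (a + (s : ZMod N))|
      = ∑ j ∈ (Finset.range (b - a).val).image (fun s : ℕ => a + (s : ZMod N)),
          |e (j + 1) - e j| :=
        (Finset.sum_image (f := fun j => |e (j + 1) - e j|) hinj).symm
    _ ≤ ∑ j : ZMod N, |e (j + 1) - e j| :=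
        Finset.sum_le_sum_of_subset_of_nonneg (Finset.subset_univ _)
          (fun _ _ _ => abs_nonneg _)

lemma poincare_cycle {N : ℕ} [NeZero N] (e : ZMod N → ℝ) (h0 : ∑ i : ZMod N, e i = 0) :
    ∑ i : ZMod N, e i ^ 2 ≤ (N : ℝ) ^ 2 * ∑ i : ZMod N, (e (i + 1) - e i) ^ 2 := by
  have hne : (Finset.univ : Finset (ZMod N)).Nonempty := Finset.univ_nonempty
  obtain ⟨j0, hj0⟩ : ∃ j, e j ≤ 0 := by
    by_contra h; push_neg at h
    have := Finset.sum_pos (fun i _ => h i) hne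
    rw [h0] at this; exact lt_irrefl 0 this
  obtain ⟨j1, hj1⟩ : ∃ j, 0 ≤ e j := by
    by_contra h; push_neg at h
    have : ∑ i : ZMod N, e i < 0 := Finset.sum_neg (fun i _ => h i) hne
    rw [h0] at this; exact lt_irrefl 0 this
  set S := ∑ j : ZMod N, |e (j + 1) - e j| with hS
  have key : ∀ i, |e i| ≤ S := by
    intro i
    rcases le_total 0 (e i) with h | h
    · have h1 := diff_le_sum_abs e j0 i
      have h2 := le_abs_self (e i - e j0)
      rw [abs_of_nonneg h]; rw [← hS] at h1; linarith
    · have h1 := diff_le_sum_abs e i j1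
      have h2 := le_abs_self (e j1 - e i)
      rw [abs_of_nonpos h]; rw [← hS] at h1; linarith
  have hSsq : S ^ 2 ≤ (N : ℝ) * ∑ j : ZMod N, (e (j + 1) - e j) ^ 2 := by
    have h := sq_sum_le_card_mul_sum_sq
      (s := (Finset.univ : Finset (ZMod N))) (f := fun j => |e (j + 1) - e j|)
    simpa [sq_abs, ZMod.card] using h
  have hNnn : (0:ℝ) ≤ (N:ℝ) := Nat.cast_nonneg N
  calc ∑ i : ZMod N, e i ^ 2 ≤ ∑ _i : ZMod N, S ^ 2 := by
        refine Finset.sum_le_sum fun i _ => ?_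
        rw [← sq_abs]; exact pow_le_pow_left₀ (abs_nonneg _) (key i) 2
    _ = (N : ℝ) * S ^ 2 := by
        rw [Finset.sum_const, Finset.card_univ, ZMod.card, nsmul_eq_mul]
    _ ≤ (N : ℝ) * ((N : ℝ) * ∑ j : ZMod N, (e (j + 1) - e j) ^ 2) :=
        mul_le_mul_of_nonneg_left hSsq hNnn
    _ = (N : ℝ) ^ 2 * ∑ i : ZMod N, (e (i + 1) - e i) ^ 2 := by ring

/-- The workload-equalization dynamics makes the Lyapunov function
`V(t) = ½ ∑ᵢ (mᵢ(t) − m̄)²` decay exponentially: `V(t) ≤ V(0)·exp(−(2 k w̲/N²) t)`.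
Here `m̄ = (1/N) ∑ᵢ mᵢ(0)`, which is constant in `t` along the dynamics. -/
theorem workload_equalization_exponential (N : ℕ) (hN : 1 ≤ N) (k wlow : ℝ)
    (hk : 0 < k) (hwlow : 0 < wlow) (m w : ℝ → ZMod N → ℝ)
    (hw : ∀ (i : ZMod N) (t : ℝ), 0 ≤ t → wlow ≤ w t i)
    (hdyn : ∀ (i : ZMod N) (t : ℝ), 0 ≤ t →
      HasDerivAt (fun s => m s i)
        (k * (m t (i + 1) - m t i) * w t (i + 1) - k * (m t i - m t (i - 1)) * w t i) t) :
    haveI : NeZero N := ⟨by omega⟩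
    ∀ t : ℝ, 0 ≤ t →
      (1 / 2) * ∑ i : ZMod N, (m t i - (1 / N) * ∑ j : ZMod N, m 0 j) ^ 2
        ≤ ((1 / 2) * ∑ i : ZMod N, (m 0 i - (1 / N) * ∑ j : ZMod N, m 0 j) ^ 2)
            * Real.exp (-(2 * k * wlow / (N : ℝ) ^ 2) * t) := by
  haveI : NeZero N := ⟨by omega⟩
  intro t ht
  have hN0 : (0:ℝ) < (N:ℝ) := by exact_mod_cast (by omega : 0 < N)
  set mbar : ℝ := (1 / (N:ℝ)) * ∑ j : ZMod N, m 0 j with hmbar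
  set c : ℝ := 2 * k * wlow / (N:ℝ)^2 with hc
  set V : ℝ → ℝ := fun s => (1/2) * ∑ i : ZMod N, (m s i - mbar)^2 with hVdef
  show V t ≤ V 0 * Real.exp (-c * t)
  -- derivative of V
  have hVder : ∀ x : ℝ, 0 ≤ x → HasDerivAt V
      (∑ i : ZMod N, (m x i - mbar) *
        (k * (m x (i + 1) - m x i) * w x (i + 1) - k * (m x i - m x (i - 1)) * w x i)) x := by
    intro x hx
    have h1 : HasDerivAt (fun s => ∑ i : ZMod N, (m s i - mbar)^2)
        (∑ i : ZMod N, (2:ℝ) * (m x i - mbar) ^ 1 *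
          (k * (m x (i + 1) - m x i) * w x (i + 1) - k * (m x i - m x (i - 1)) * w x i)) x :=
      HasDerivAt.fun_sum fun i _ => by
        simpa using ((hdyn i x hx).sub_const mbar).fun_pow 2
    have h2 := h1.const_mul (1/2 : ℝ)
    convert h2 using 1
    case e'_4 => rfl
    case e'_5 => rfl
    rw [Finset.mul_sum]
    exact Finset.sum_congr rfl fun i _ => by ring
  -- reindexing identity for the derivative value
  have hD : ∀ x : ℝ,
      ∑ i : ZMod N, (m x i - mbar) *
        (k * (m x (i + 1) - m x i) * w x (i + 1) - k * (m x i - m x (i - 1)) * w x i)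
      = -(k * ∑ i : ZMod N, w x (i + 1) * (m x (i + 1) - m x i)^2) := by
    intro x
    have hre : ∑ i : ZMod N, (m x (i + 1) - mbar) * (k * (m x (i + 1) - m x i) * w x (i + 1))
        = ∑ i : ZMod N, (m x i - mbar) * (k * (m x i - m x (i - 1)) * w x i) := by
      refine Fintype.sum_equiv (Equiv.addRight (1 : ZMod N)) _ _ fun i => ?_
      simp [add_sub_cancel_right]
    calc ∑ i : ZMod N, (m x i - mbar) *
          (k * (m x (i + 1) - m x i) * w x (i + 1) - k * (m x i - m x (i - 1)) * w x i)
        = ∑ i : ZMod N, ((m x i - mbar) * (k * (m x (i + 1) - m x i) * w x (i + 1))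
            - (m x i - mbar) * (k * (m x i - m x (i - 1)) * w x i)) :=
          Finset.sum_congr rfl fun i _ => by ring
      _ = ∑ i : ZMod N, (m x i - mbar) * (k * (m x (i + 1) - m x i) * w x (i + 1))
            - ∑ i : ZMod N, (m x i - mbar) * (k * (m x i - m x (i - 1)) * w x i) :=
          Finset.sum_sub_distrib _ _
      _ = ∑ i : ZMod N, (m x i - mbar) * (k * (m x (i + 1) - m x i) * w x (i + 1))
            - ∑ i : ZMod N, (m x (i + 1) - mbar) * (k * (m x (i + 1) - m x i) * w x (i + 1)) := by
          rw [hre]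
      _ = ∑ i : ZMod N, -(k * (w x (i + 1) * (m x (i + 1) - m x i)^2)) := by
          rw [← Finset.sum_sub_distrib]
          exact Finset.sum_congr rfl fun i _ => by ring
      _ = -(k * ∑ i : ZMod N, w x (i + 1) * (m x (i + 1) - m x i)^2) := by
          rw [Finset.mul_sum, ← Finset.sum_neg_distrib]
  -- conservation of the total workload
  have hcons : ∀ x : ℝ, 0 ≤ x → ∑ i : ZMod N, m x i = ∑ i : ZMod N, m 0 i := by
    intro x hx
    have hcont : ContinuousOn (fun s => ∑ i : ZMod N, m s i) (Set.Icc 0 x) := by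
      intro y hy
      exact (HasDerivAt.fun_sum fun i _ =>
        hdyn i y hy.1).continuousAt.continuousWithinAt
    have hderiv : ∀ y ∈ Set.Ico (0:ℝ) x,
        HasDerivWithinAt (fun s => ∑ i : ZMod N, m s i) 0 (Set.Ici y) y := by
      intro y hy
      have h1 : HasDerivAt (fun s => ∑ i : ZMod N, m s i)
          (∑ i : ZMod N, (k * (m y (i + 1) - m y i) * w y (i + 1)
            - k * (m y i - m y (i - 1)) * w y i)) y :=
        HasDerivAt.fun_sum fun i _ => hdyn i y hy.1
      have h2 : ∑ i : ZMod N, (k * (m y (i + 1) - m y i) * w y (i + 1)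
          - k * (m y i - m y (i - 1)) * w y i) = 0 := by
        rw [Finset.sum_sub_distrib]
        have hre : ∑ i : ZMod N, k * (m y (i + 1) - m y i) * w y (i + 1)
            = ∑ i : ZMod N, k * (m y i - m y (i - 1)) * w y i := by
          refine Fintype.sum_equiv (Equiv.addRight (1 : ZMod N)) _ _ fun i => ?_
          simp [add_sub_cancel_right]
        rw [hre, sub_self]
      exact (h2 ▸ h1).hasDerivWithinAt
    exact constant_of_has_deriv_right_zero hcont hderiv x ⟨hx, le_refl x⟩
  have hesum : ∀ x : ℝ, 0 ≤ x → ∑ i : ZMod N, (m x i - mbar) = 0 := by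
    intro x hx
    rw [Finset.sum_sub_distrib, Finset.sum_const, Finset.card_univ, ZMod.card,
      nsmul_eq_mul, hcons x hx, hmbar]
    field_simp
    ring
  -- the key decay inequality
  have hkey : ∀ x : ℝ, 0 ≤ x →
      (∑ i : ZMod N, (m x i - mbar) *
        (k * (m x (i + 1) - m x i) * w x (i + 1) - k * (m x i - m x (i - 1)) * w x i))
        + c * V x ≤ 0 := by
    intro x hx
    rw [hD x]
    have hpoin := poincare_cycle (fun i => m x i - mbar) (hesum x hx)
    simp only [sub_sub_sub_cancel_right] at hpoin
    have hsw : k * wlow * ∑ i : ZMod N, (m x (i + 1) - m x i)^2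
        ≤ k * ∑ i : ZMod N, w x (i + 1) * (m x (i + 1) - m x i)^2 := by
      rw [Finset.mul_sum, Finset.mul_sum]
      refine Finset.sum_le_sum fun i _ => ?_
      have h1 := hw (i + 1) x hx
      calc k * wlow * (m x (i + 1) - m x i)^2
          = k * (wlow * (m x (i + 1) - m x i)^2) := by ring
        _ ≤ k * (w x (i + 1) * (m x (i + 1) - m x i)^2) :=
            mul_le_mul_of_nonneg_left
              (mul_le_mul_of_nonneg_right h1 (sq_nonneg _)) hk.le
    have hcv : c * V x ≤ k * wlow * ∑ i : ZMod N, (m x (i + 1) - m x i)^2 := by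
      have hkw : (0:ℝ) ≤ k * wlow / (N:ℝ)^2 := by positivity
      calc c * V x = (k * wlow / (N:ℝ)^2) * ∑ i : ZMod N, (m x i - mbar)^2 := by
            rw [hc, hVdef]; ring
        _ ≤ (k * wlow / (N:ℝ)^2) *
            ((N:ℝ)^2 * ∑ i : ZMod N, (m x (i + 1) - m x i)^2) :=
            mul_le_mul_of_nonneg_left hpoin hkw
        _ = k * wlow * ∑ i : ZMod N, (m x (i + 1) - m x i)^2 := by
            field_simp
    linarith
  -- the auxiliary function g = V · exp(c·)
  set g : ℝ → ℝ := fun s => V s * Real.exp (c * s) with hgdef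
  have hgder : ∀ x ∈ Set.Ici (0:ℝ), ∃ y, HasDerivAt g y x ∧ y ≤ 0 := by
    intro x hx
    have hexp : HasDerivAt (fun s : ℝ => Real.exp (c * s)) (Real.exp (c * x) * c) x := by
      have h : HasDerivAt (fun s : ℝ => c * s) c x := by
        simpa using (hasDerivAt_id x).const_mul c
      exact h.exp
    refine ⟨_, (hVder x hx).mul hexp, ?_⟩
    have h1 := hkey x hx
    have h2 := (Real.exp_pos (c * x)).le
    have h3 : (∑ i : ZMod N, (m x i - mbar) *
        (k * (m x (i + 1) - m x i) * w x (i + 1) - k * (m x i - m x (i - 1)) * w x i))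
          * Real.exp (c * x) + V x * (Real.exp (c * x) * c)
        = ((∑ i : ZMod N, (m x i - mbar) *
        (k * (m x (i + 1) - m x i) * w x (i + 1) - k * (m x i - m x (i - 1)) * w x i))
          + c * V x) * Real.exp (c * x) := by ring
    rw [h3]
    exact mul_nonpos_of_nonpos_of_nonneg h1 h2
  have hanti : AntitoneOn g (Set.Ici (0:ℝ)) := by
    refine antitoneOn_of_deriv_nonpos (convex_Ici 0) ?_ ?_ ?_
    · intro y hy
      obtain ⟨yv, hdy, _⟩ := hgder y hy
      exact hdy.continuousAt.continuousWithinAt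
    · intro y hy
      rw [interior_Ici] at hy
      obtain ⟨yv, hdy, _⟩ := hgder y (Set.mem_Ici.mpr (le_of_lt hy))
      exact hdy.differentiableAt.differentiableWithinAt
    · intro y hy
      rw [interior_Ici] at hy
      obtain ⟨yv, hdy, hy0⟩ := hgder y (Set.mem_Ici.mpr (le_of_lt hy))
      rw [hdy.deriv]; exact hy0
  have hg : g t ≤ g 0 := hanti Set.self_mem_Ici (Set.mem_Ici.mpr ht) ht
  have hg0 : g 0 = V 0 := by simp [hgdef]
  have h4 := mul_le_mul_of_nonneg_right hg (Real.exp_pos (-(c * t))).le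
  calc V t = V t * Real.exp (c * t) * Real.exp (-(c * t)) := by
        rw [mul_assoc, ← Real.exp_add]; simp
    _ = g t * Real.exp (-(c * t)) := by rw [hgdef]
    _ ≤ g 0 * Real.exp (-(c * t)) := h4
    _ = V 0 * Real.exp (-c * t) := by rw [hg0, neg_mul]
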